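/- In any Zinbiel algebra A over a field of characteristic 0, for every a in A and all positive integers i, j, one has a^i a^j = binomial(i+j-1, j) * a^{i+j}, where powers are defined by a^1 = a and a^{i+1} = a(a^i). -/
import Mathlib


/-- Right-normed powers: `apow mul a (i-1)` represents `a^i`, with
`a^1 = a` and `a^{i+1} = a (a^i)`. -/
def apow {A : Type*} (mul : A → A → A) (a : A) : ℕ → A
  | 0 => a
  | n + 1 => mul a (apow mul a n)

lemma apow_key (k A : Type*) [Field k] [AddCommGroup A] [Module k A]
    (mul : A →ₗ[k] A →ₗ[k] A)
    (hz : ∀ x y z : A, mul (mul x y) z = mul x (mul z y) + mul x (mul y z))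
    (a : A) : ∀ s m n : ℕ, m + n = s →
    mul (apow (fun x y => mul x y) a m) (apow (fun x y => mul x y) a n)
      = (((m + n + 1).choose (n + 1) : k)) • apow (fun x y => mul x y) a (m + n + 1) := by
  intro s
  induction s with
  | zero =>
    intro m n h
    obtain ⟨rfl, rfl⟩ : m = 0 ∧ n = 0 := by omega
    simp [apow]
  | succ s ih =>
    intro m n h
    match m with
    | 0 =>
      show mul a _ = _
      simp only [Nat.zero_add, Nat.choose_self, Nat.cast_one, one_smul]
      rfl
    | m' + 1 =>
      have e1 : apow (fun x y => mul x y) a (m' + 1) = mul a (apow (fun x y => mul x y) a m') := rfl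
      rw [e1, hz]
      rw [ih n m' (by omega), ih m' n (by omega)]
      rw [map_smul, map_smul]
      have e2 : ∀ t : ℕ, mul a (apow (fun x y => mul x y) a t) = apow (fun x y => mul x y) a (t + 1) := fun t => rfl
      rw [e2, e2]
      have hnm : n + m' + 1 + 1 = m' + 1 + n + 1 := by omega
      rw [hnm]
      have hnm2 : m' + n + 1 + 1 = m' + 1 + n + 1 := by omega
      rw [hnm2, ← add_smul]
      congr 1
      have h1 : (n + m' + 1).choose (m' + 1) = (n + m' + 1).choose n := by
        have hd : n + m' + 1 - (m' + 1) = n := by omega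
        have hs := Nat.choose_symm (show m' + 1 ≤ n + m' + 1 by omega)
        rw [hd] at hs
        exact hs.symm
      rw [h1, show n + m' + 1 = m' + n + 1 from by omega]
      have h2 : (m' + 1 + n + 1).choose (n + 1) = (m' + n + 1).choose n + (m' + n + 1).choose (n + 1) := by
        have : m' + 1 + n + 1 = (m' + n + 1) + 1 := by omega
        rw [this, Nat.choose_succ_succ']
      rw [h2]
      push_cast
      ring

/-- In any Zinbiel algebra over a field of characteristic 0,
`a^i a^j = binomial (i+j-1) j • a^(i+j)` for positive integers `i, j`. -/
theorem stmt1 (k A : Type*) [Field k] [CharZero k] [AddCommGroup A] [Module k A]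
    (mul : A →ₗ[k] A →ₗ[k] A)
    (hz : ∀ x y z : A, mul (mul x y) z = mul x (mul z y) + mul x (mul y z))
    (a : A) (i j : ℕ) (hi : 1 ≤ i) (hj : 1 ≤ j) :
    mul (apow (fun x y => mul x y) a (i - 1)) (apow (fun x y => mul x y) a (j - 1))
      = (((i + j - 1).choose j : k)) • apow (fun x y => mul x y) a (i + j - 1) := by
  obtain ⟨m, rfl⟩ := Nat.exists_eq_add_of_le hi
  obtain ⟨n, rfl⟩ := Nat.exists_eq_add_of_le hj
  have h1 : 1 + m - 1 = m := by omega
  have h2 : 1 + n - 1 = n := by omega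
  have h3 : 1 + m + (1 + n) - 1 = m + n + 1 := by omega
  rw [h1, h2, h3]
  have := apow_key k A mul hz a (m + n) m n rfl
  rw [Nat.add_comm 1 n, this]
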